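/- Let n ≥ 2 and define P_1 = {1, ..., n}, P_2 = {n+1, ..., 2n}, and P_3 = {1 + (1+i)n : i = 1, ..., n} as subsets of ℝ. For any C_1 ⊆ P_1, C_2 ⊆ P_2, C_3 ⊆ P_3 that are strongly 3-separated (dist(C_i, C_j) ≥ 3·max_ℓ diam(C_ℓ) for all i ≠ j), at least one C_i has |C_i| ≤ 1. -/
import Mathlib


/-- For `P₁ = {1,...,n}`, `P₂ = {n+1,...,2n}`,
`P₃ = {1+(1+i)n : i = 1..n}` in `ℝ` and any `C₁ ⊆ P₁`, `C₂ ⊆ P₂`, `C₃ ⊆ P₃`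
that are strongly 3-separated, at least one `C_i` has at most one point. -/
theorem stmt6 (n : ℕ) (hn : 2 ≤ n) (C₁ C₂ C₃ : Finset ℝ)
    (h1 : ∀ x ∈ C₁, ∃ i : ℕ, 1 ≤ i ∧ i ≤ n ∧ x = (i : ℝ))
    (h2 : ∀ x ∈ C₂, ∃ i : ℕ, 1 ≤ i ∧ i ≤ n ∧ x = (n : ℝ) + i)
    (h3 : ∀ x ∈ C₃, ∃ i : ℕ, 1 ≤ i ∧ i ≤ n ∧ x = 1 + (1 + (i:ℝ)) * n)
    (hsep12 : ∀ p ∈ C₁, ∀ q ∈ C₂,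
      3 * max (Metric.diam (↑C₁ : Set ℝ))
        (max (Metric.diam (↑C₂ : Set ℝ)) (Metric.diam (↑C₃ : Set ℝ))) ≤ dist p q)
    (hsep13 : ∀ p ∈ C₁, ∀ q ∈ C₃,
      3 * max (Metric.diam (↑C₁ : Set ℝ))
        (max (Metric.diam (↑C₂ : Set ℝ)) (Metric.diam (↑C₃ : Set ℝ))) ≤ dist p q)
    (hsep23 : ∀ p ∈ C₂, ∀ q ∈ C₃,
      3 * max (Metric.diam (↑C₁ : Set ℝ))
        (max (Metric.diam (↑C₂ : Set ℝ)) (Metric.diam (↑C₃ : Set ℝ))) ≤ dist p q) :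
    C₁.card ≤ 1 ∨ C₂.card ≤ 1 ∨ C₃.card ≤ 1 := by
  by_contra hcon
  push_neg at hcon
  obtain ⟨hc1, hc2, hc3⟩ := hcon
  -- C₃ has two distinct points
  obtain ⟨x, hx, y, hy, hxy⟩ := Finset.one_lt_card.mp hc3
  obtain ⟨p, hp⟩ := Finset.card_pos.mp (by omega : 0 < C₁.card)
  obtain ⟨q, hq⟩ := Finset.card_pos.mp (by omega : 0 < C₂.card)
  obtain ⟨i, hi1, hi2, hix⟩ := h3 x hx
  obtain ⟨j, hj1, hj2, hjy⟩ := h3 y hy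
  obtain ⟨a, ha1, ha2, hap⟩ := h1 p hp
  obtain ⟨b, hb1, hb2, hbq⟩ := h2 q hq
  have hij : i ≠ j := by
    intro h; apply hxy; rw [hix, hjy, h]
  have hn0 : (1:ℝ) ≤ |(i:ℝ) - j| := by
    have hz : 1 ≤ |(i:ℤ) - (j:ℤ)| := by
      rcases Nat.lt_or_ge i j with h | h
      · rw [abs_sub_comm, abs_of_nonneg (by omega)]; omega
      · rw [abs_of_nonneg (by omega)]; omega
    have : ((|(i:ℤ) - (j:ℤ)| : ℤ) : ℝ) = |(i:ℝ) - j| := by push_cast; rfl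
    rw [← this]; exact_mod_cast hz
  have hdxy : (n:ℝ) ≤ dist x y := by
    rw [hix, hjy, Real.dist_eq]
    have : (1 + (1 + (i:ℝ)) * n) - (1 + (1 + (j:ℝ)) * n) = ((i:ℝ) - j) * n := by ring
    rw [this, abs_mul, abs_of_nonneg (by positivity : (0:ℝ) ≤ (n:ℝ))]
    nlinarith
  have hdiam : (n:ℝ) ≤ Metric.diam (↑C₃ : Set ℝ) :=
    hdxy.trans (Metric.dist_le_diam_of_mem (C₃.finite_toSet.isBounded) hx hy)
  have hmax : (n:ℝ) ≤ max (Metric.diam (↑C₁ : Set ℝ))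
      (max (Metric.diam (↑C₂ : Set ℝ)) (Metric.diam (↑C₃ : Set ℝ))) :=
    hdiam.trans (le_max_of_le_right (le_max_right _ _))
  have hsep := hsep12 p hp q hq
  have hdpq : dist p q ≤ 2 * n - 1 := by
    rw [hap, hbq, Real.dist_eq]
    have h1' : (1:ℝ) ≤ (a:ℝ) := by exact_mod_cast ha1
    have h2' : (a:ℝ) ≤ n := by exact_mod_cast ha2
    have h3' : (1:ℝ) ≤ (b:ℝ) := by exact_mod_cast hb1
    have h4' : (b:ℝ) ≤ n := by exact_mod_cast hb2
    rw [abs_le]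
    constructor <;> nlinarith
  have hn' : (2:ℝ) ≤ n := by exact_mod_cast hn
  nlinarith
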